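/- Let p be a prime, let χ : 𝔽_p → ℂ be a nontrivial multiplicative character (extended by χ(0) = 0), and let A, B ⊆ 𝔽_p be finite sets. Then |∑_{a ∈ A} ∑_{b ∈ B} χ(a + b)| ≤ √(p · |A| · |B|). -/

import Mathlib

open Finset

lemma key_sum (p : ℕ) [Fact p.Prime] (χ : MulChar (ZMod p) ℂ) (hχ : χ ≠ 1)
    (c : ZMod p) :
    ∑ x : ZMod p, χ x * χ⁻¹ (x + c) = if c = 0 then (p - 1 : ℂ) else -1 := by
  by_cases hc : c = 0
  · rw [if_pos hc]
    have h1 : ∀ x : ZMod p, χ x * χ⁻¹ (x + c) = 1 - (if x = 0 then 1 else 0) := by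
      intro x
      rcases eq_or_ne x 0 with h | h
      · rw [h, if_pos rfl, MulChar.map_zero, zero_mul]; norm_num
      · rw [if_neg h, hc, add_zero, MulChar.inv_apply_eq_inv', mul_inv_cancel₀, sub_zero]
        exact (IsUnit.map χ (IsUnit.mk0 x h)).ne_zero
    rw [Finset.sum_congr rfl fun x _ => h1 x, Finset.sum_sub_distrib,
      Finset.sum_ite_eq' Finset.univ (0 : ZMod p) (fun _ => (1 : ℂ))]
    simp [Finset.card_univ, ZMod.card p]
  · rw [if_neg hc]
    have hcu : χ c ≠ 0 := (IsUnit.map χ (IsUnit.mk0 c hc)).ne_zero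
    have h3 : χ (-c) * χ⁻¹ c = χ (-1) := by
      rw [show (-c : ZMod p) = -1 * c by ring, map_mul, MulChar.inv_apply_eq_inv',
        mul_assoc, mul_inv_cancel₀ hcu, mul_one]
    have key : ∀ y : ZMod p, χ (-c * y) * χ⁻¹ (-c * y + c) = χ (-1) * (χ y * χ⁻¹ (1 - y)) := by
      intro y
      have h2 : -c * y + c = c * (1 - y) := by ring
      rw [h2, map_mul, map_mul]
      linear_combination (χ y * χ⁻¹ (1 - y)) * h3
    calc ∑ x : ZMod p, χ x * χ⁻¹ (x + c)
        = ∑ y : ZMod p, χ (-c * y) * χ⁻¹ (-c * y + c) := by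
          refine (Fintype.sum_equiv (Equiv.mulLeft₀ (-c) (neg_ne_zero.mpr hc)) _ _ ?_).symm
          intro y; rfl
      _ = χ (-1) * ∑ y : ZMod p, χ y * χ⁻¹ (1 - y) := by
          rw [Finset.mul_sum]; exact Finset.sum_congr rfl fun y _ => key y
      _ = χ (-1) * jacobiSum χ χ⁻¹ := rfl
      _ = -1 := by
          rw [jacobiSum_nontrivial_inv hχ]
          have h11 : χ (-1) * χ (-1) = 1 := by
            rw [← map_mul]; norm_num
          rw [mul_neg, h11]

theorem vinogradov_character_sum_bound
    (p : ℕ) (hp : p.Prime) (χ : MulChar (ZMod p) ℂ) (hχ : χ ≠ 1)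
    (A B : Finset (ZMod p)) :
    ‖∑ a ∈ A, ∑ b ∈ B, χ (a + b)‖ ≤
      Real.sqrt (p * A.card * B.card) := by
  haveI : Fact p.Prime := ⟨hp⟩
  set f : ZMod p → ℂ := fun a => ∑ b ∈ B, χ (a + b) with hf
  have hC : ∑ a : ZMod p, (f a * (starRingEnd ℂ) (f a))
      = ((p : ℂ) * B.card - B.card ^ 2) := by
    have expand : ∀ a : ZMod p, f a * (starRingEnd ℂ) (f a)
        = ∑ b ∈ B, ∑ b' ∈ B, χ (a + b) * χ⁻¹ (a + b') := by
      intro a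
      rw [hf]
      simp only [map_sum, Finset.sum_mul_sum]
      refine Finset.sum_congr rfl fun b _ => Finset.sum_congr rfl fun b' _ => ?_
      rw [show (starRingEnd ℂ) (χ (a + b')) = star (χ (a + b')) from rfl,
        MulChar.star_apply']
    calc ∑ a : ZMod p, (f a * (starRingEnd ℂ) (f a))
        = ∑ b ∈ B, ∑ b' ∈ B, ∑ a : ZMod p, χ (a + b) * χ⁻¹ (a + b') := by
          rw [Finset.sum_congr rfl fun a _ => expand a, Finset.sum_comm]
          exact Finset.sum_congr rfl fun b _ => Finset.sum_comm
      _ = ∑ b ∈ B, ∑ b' ∈ B, ((if b' = b then ((p : ℂ)) else 0) - 1) := by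
          refine Finset.sum_congr rfl fun b _ => Finset.sum_congr rfl fun b' _ => ?_
          have hsub : ∑ a : ZMod p, χ (a + b) * χ⁻¹ (a + b')
              = ∑ x : ZMod p, χ x * χ⁻¹ (x + (b' - b)) := by
            refine Fintype.sum_equiv (Equiv.addRight b) _ _ fun a => ?_
            simp only [Equiv.coe_addRight]
            rw [show a + b + (b' - b) = a + b' from by ring]
          rw [hsub, key_sum p χ hχ (b' - b)]
          rcases eq_or_ne b' b with h | h
          · simp [h]
          · simp [h, sub_ne_zero.mpr h]
      _ = ((p : ℂ) * B.card - B.card ^ 2) := by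
          have hrow : ∀ b ∈ B, ∑ b' ∈ B, ((if b' = b then ((p : ℂ)) else 0) - 1)
              = (p : ℂ) - B.card := by
            intro b hb
            rw [Finset.sum_sub_distrib, Finset.sum_ite_eq' B b (fun _ => ((p : ℂ))),
              if_pos hb]
            simp
          rw [Finset.sum_congr rfl hrow, Finset.sum_const, nsmul_eq_mul]
          ring
  have hT : ∑ a : ZMod p, Complex.normSq (f a) = p * B.card - (B.card : ℝ) ^ 2 := by
    have hT' : ((∑ a : ZMod p, Complex.normSq (f a) : ℝ) : ℂ)
        = ((p * B.card - (B.card : ℝ) ^ 2 : ℝ) : ℂ) := by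
      push_cast
      rw [← hC]
      exact Finset.sum_congr rfl fun a _ => (Complex.mul_conj (f a)).symm
    exact_mod_cast hT'
  have h1 : ‖∑ a ∈ A, f a‖ ≤ ∑ a ∈ A, ‖f a‖ :=
    norm_sum_le _ _
  have h2 : (∑ a ∈ A, ‖f a‖) ^ 2
      ≤ A.card * ∑ a ∈ A, ‖f a‖ ^ 2 := by
    exact_mod_cast sq_sum_le_card_mul_sum_sq (s := A) (f := fun a => ‖f a‖)
  have h3 : ∑ a ∈ A, ‖f a‖ ^ 2 ≤ ∑ a : ZMod p, ‖f a‖ ^ 2 :=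
    Finset.sum_le_sum_of_subset_of_nonneg (Finset.subset_univ A)
      (fun a _ _ => by positivity)
  have h4 : ∑ a : ZMod p, ‖f a‖ ^ 2 ≤ p * B.card := by
    have heq : ∑ a : ZMod p, ‖f a‖ ^ 2 = ∑ a : ZMod p, Complex.normSq (f a) :=
      Finset.sum_congr rfl fun a _ => Complex.sq_norm (f a)
    rw [heq, hT]
    nlinarith [sq_nonneg (B.card : ℝ)]
  have habs : ‖∑ a ∈ A, f a‖ ^ 2 ≤ p * A.card * B.card := by
    calc ‖∑ a ∈ A, f a‖ ^ 2
        ≤ (∑ a ∈ A, ‖f a‖) ^ 2 := by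
          apply pow_le_pow_left₀ (norm_nonneg _) h1
      _ ≤ A.card * ∑ a ∈ A, ‖f a‖ ^ 2 := h2
      _ ≤ A.card * ∑ a : ZMod p, ‖f a‖ ^ 2 :=
          mul_le_mul_of_nonneg_left h3 (by positivity)
      _ ≤ A.card * (p * B.card) :=
          mul_le_mul_of_nonneg_left h4 (by positivity)
      _ = p * A.card * B.card := by ring
  exact Real.le_sqrt_of_sq_le habs
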